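/- For every δ ∈ (0,1] there exists a constant C = C(δ) > 0 such that for all t ≥ 1, every nonzero integer k, and all ξ, η ∈ ℝ: ⟨t⟩²(⟨t⟩ + |(k,ξ)|)·⟨t − ξ/k⟩² / ((⟨t⟩ + |ξ/k|)·⟨ξ/k⟩²) ≤ C · ⟨t⟩²(⟨t⟩ + |(k,η)|)·⟨t − η/k⟩² / ((⟨t⟩ + |η/k|)·⟨η/k⟩²) · exp( δ · ( min(⟨ξ−η⟩, ⟨k,η⟩) )^{1/2} ). -/
import Mathlib

noncomputable def jb (a : ℝ) : ℝ := Real.sqrt (1 + a ^ 2)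
noncomputable def jb2 (k : ℤ) (η : ℝ) : ℝ := Real.sqrt (1 + (k : ℝ) ^ 2 + η ^ 2)

lemma one_le_jb (a : ℝ) : 1 ≤ jb a := by
  have h := Real.sqrt_le_sqrt (show (1:ℝ) ≤ 1 + a ^ 2 by nlinarith [sq_nonneg a])
  rw [Real.sqrt_one] at h
  exact h

lemma jb_pos (a : ℝ) : 0 < jb a := lt_of_lt_of_le one_pos (one_le_jb a)

lemma jb_sq (a : ℝ) : jb a ^ 2 = 1 + a ^ 2 := Real.sq_sqrt (by positivity)

lemma abs_le_jb (a : ℝ) : |a| ≤ jb a := by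
  rw [jb, show |a| = Real.sqrt (a^2) by rw [Real.sqrt_sq_eq_abs]]
  exact Real.sqrt_le_sqrt (by linarith)

lemma jb_le_one_add_abs (a : ℝ) : jb a ≤ 1 + |a| := by
  have h := Real.sqrt_le_sqrt (show 1 + a^2 ≤ (1+|a|)^2 by
    nlinarith [abs_nonneg a, sq_abs a])
  rw [jb]
  rwa [Real.sqrt_sq (by positivity)] at h

lemma jb_mono {a b : ℝ} (h : |a| ≤ |b|) : jb a ≤ jb b :=
  Real.sqrt_le_sqrt (by nlinarith [sq_abs a, sq_abs b, abs_nonneg a])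

lemma jb_add_le (a b : ℝ) : jb (a + b) ≤ 2 * jb a * jb b := by
  have ha := jb_sq a
  have hb := jb_sq b
  have ha0 := (jb_pos a).le
  have hb0 := (jb_pos b).le
  have h : 1 + (a + b) ^ 2 ≤ (2 * jb a * jb b) ^ 2 := by
    nlinarith [sq_nonneg (a - b), sq_nonneg (a * b)]
  calc jb (a + b) = Real.sqrt (1 + (a + b) ^ 2) := rfl
    _ ≤ Real.sqrt ((2 * jb a * jb b) ^ 2) := Real.sqrt_le_sqrt h
    _ = 2 * jb a * jb b := Real.sqrt_sq (by positivity)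

lemma exp_bound_aux {δ m : ℝ} (hδ : 0 < δ) (hm : 1 ≤ m) :
    64 * m ^ 6 ≤ 64 * 479001600 / δ ^ 12 * Real.exp (δ * Real.sqrt m) := by
  have hm0 : (0:ℝ) ≤ m := by linarith
  have hs : Real.sqrt m ^ 2 = m := Real.sq_sqrt hm0
  have h := Real.pow_div_factorial_le_exp (x := δ * Real.sqrt m)
    (by positivity) 12
  have h12 : ((12:ℕ).factorial : ℝ) = 479001600 := by norm_num [Nat.factorial]
  have key : δ ^ 12 * m ^ 6 / 479001600 ≤ Real.exp (δ * Real.sqrt m) := by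
    calc δ ^ 12 * m ^ 6 / 479001600
        = (δ * Real.sqrt m) ^ 12 / ((12:ℕ).factorial : ℝ) := by
          rw [h12, mul_pow, show (Real.sqrt m) ^ 12 = (Real.sqrt m ^ 2) ^ 6 by ring, hs]
      _ ≤ Real.exp (δ * Real.sqrt m) := h
  have hδ12 : (0:ℝ) < δ ^ 12 := by positivity
  rw [div_mul_eq_mul_div, le_div_iff₀ hδ12]
  nlinarith [key]

set_option maxHeartbeats 2000000 in
theorem stmt14 (δ : ℝ) (hδ : δ ∈ Set.Ioc (0 : ℝ) 1) :
    ∃ C : ℝ, 0 < C ∧ ∀ (t : ℝ), 1 ≤ t → ∀ (k : ℤ), k ≠ 0 → ∀ ξ η : ℝ,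
    (jb t) ^ 2 * (jb t + Real.sqrt ((k : ℝ) ^ 2 + ξ ^ 2)) * (jb (t - ξ / (k : ℝ))) ^ 2 /
        ((jb t + |ξ / (k : ℝ)|) * (jb (ξ / (k : ℝ))) ^ 2) ≤
      C * ((jb t) ^ 2 * (jb t + Real.sqrt ((k : ℝ) ^ 2 + η ^ 2)) *
              (jb (t - η / (k : ℝ))) ^ 2 /
            ((jb t + |η / (k : ℝ)|) * (jb (η / (k : ℝ))) ^ 2)) *
        Real.exp (δ * Real.sqrt (min (jb (ξ - η)) (jb2 k η))) := by
  obtain ⟨hδ0, hδ1⟩ := hδ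
  refine ⟨64 * 479001600 / δ ^ 12, by positivity, ?_⟩
  intro t ht k hk ξ η
  have hkR : ((k:ℝ)) ≠ 0 := Int.cast_ne_zero.mpr hk
  have hK1 : (1:ℝ) ≤ |(k:ℝ)| := by
    have := Int.one_le_abs hk
    calc (1:ℝ) = ((1:ℤ):ℝ) := by norm_num
      _ ≤ ((|k|:ℤ):ℝ) := by exact_mod_cast this
      _ = |(k:ℝ)| := by push_cast; ring
  set x := ξ / (k:ℝ) with hx
  set y := η / (k:ℝ) with hy
  set T := jb t with hT
  set Jx := jb x with hJx
  set Jy := jb y with hJy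
  set Jtx := jb (t - x) with hJtx
  set Jty := jb (t - y) with hJty
  set K := |(k:ℝ)| with hKdef
  set m := min (jb (ξ - η)) (jb2 k η) with hm
  -- basic positivity facts
  have hT1 : 1 ≤ T := one_le_jb t
  have hJx1 : 1 ≤ Jx := one_le_jb x
  have hJy1 : 1 ≤ Jy := one_le_jb y
  have hJtx1 : 1 ≤ Jtx := one_le_jb _
  have hJty1 : 1 ≤ Jty := one_le_jb _
  have hT0 : 0 < T := by linarith
  have hK0 : 0 < K := by linarith
  -- sqrt(k²+ξ²) = K * Jx
  have hsq : ∀ a : ℝ, Real.sqrt ((k:ℝ) ^ 2 + a ^ 2) = K * jb (a / (k:ℝ)) := by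
    intro a
    have h1 : (k:ℝ) ^ 2 + a ^ 2 = (k:ℝ) ^ 2 * (1 + (a / (k:ℝ)) ^ 2) := by
      field_simp
    rw [h1, Real.sqrt_mul (sq_nonneg _), Real.sqrt_sq_eq_abs, jb]
  rw [hsq ξ, hsq η]
  -- 1 ≤ m
  have hB1 : 1 ≤ jb2 k η := by
    have h := Real.sqrt_le_sqrt (show (1:ℝ) ≤ 1 + (k:ℝ) ^ 2 + η ^ 2 by nlinarith [sq_nonneg ((k:ℝ)), sq_nonneg η])
    rw [Real.sqrt_one] at h
    exact h
  have hm1 : 1 ≤ m := le_min (one_le_jb _) hB1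
  -- key polynomial inequality
  have hLden : 0 < (T + |x|) * Jx ^ 2 := by positivity
  have hRden : 0 < (T + |y|) * Jy ^ 2 := by positivity
  have key : T ^ 2 * (T + K * Jx) * Jtx ^ 2 * ((T + |y|) * Jy ^ 2) ≤
      64 * m ^ 6 * (T ^ 2 * (T + K * Jy) * Jty ^ 2) * ((T + |x|) * Jx ^ 2) := by
    rcases le_total (jb (ξ - η)) (jb2 k η) with hcase | hcase
    · -- m = jb (ξ - η); use W := jb (x - y) ≤ m
      have hmD : m = jb (ξ - η) := min_eq_left hcase
      set W := jb (x - y) with hW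
      have hW1 : 1 ≤ W := one_le_jb _
      have hWm : W ≤ m := by
        rw [hmD]
        apply jb_mono
        have : x - y = (ξ - η) / (k:ℝ) := by rw [hx, hy]; ring
        rw [this, abs_div]
        calc |ξ - η| / |(k:ℝ)| ≤ |ξ - η| / 1 := by
              apply div_le_div_of_nonneg_left (abs_nonneg _) one_pos hK1
          _ = |ξ - η| := div_one _
      have h1 : T + K * Jx ≤ 2 * W * (T + K * Jy) := by
        have hadd : Jx ≤ 2 * Jy * W := by
          have := jb_add_le y (x - y)
          rw [show y + (x - y) = x by ring] at this
          exact this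
        nlinarith [mul_le_mul_of_nonneg_left hadd hK0.le, jb_pos y, jb_pos (x-y)]
      have h2 : Jtx ^ 2 ≤ 4 * W ^ 2 * Jty ^ 2 := by
        rw [hJtx, hJty, hW, jb_sq, jb_sq, jb_sq]
        nlinarith [sq_nonneg ((t-y)*(x-y)), sq_nonneg ((t-y)+(x-y)), sq_nonneg ((t-y)-(x-y))]
      have h3 : T + |y| ≤ 2 * W * (T + |x|) := by
        have habs : |y| ≤ |x| + |x - y| := by
          calc |y| = |x - (x - y)| := by ring_nf
            _ ≤ |x| + |x - y| := abs_sub _ _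
        have habsW : |x - y| ≤ W := abs_le_jb _
        nlinarith [abs_nonneg x]
      have h4 : Jy ^ 2 ≤ 4 * W ^ 2 * Jx ^ 2 := by
        rw [hJy, hJx, hW, jb_sq, jb_sq, jb_sq]
        nlinarith [sq_nonneg (x*(x-y)), sq_nonneg (x+(x-y)), sq_nonneg (x-(x-y))]
      calc T ^ 2 * (T + K * Jx) * Jtx ^ 2 * ((T + |y|) * Jy ^ 2)
          ≤ T ^ 2 * (2 * W * (T + K * Jy)) * (4 * W ^ 2 * Jty ^ 2) *
              ((2 * W * (T + |x|)) * (4 * W ^ 2 * Jx ^ 2)) := by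
            apply mul_le_mul
            · apply mul_le_mul
              · apply mul_le_mul_of_nonneg_left h1 (by positivity)
              · exact h2
              · positivity
              · positivity
            · apply mul_le_mul h3 h4 (by positivity) (by positivity)
            · positivity
            · positivity
        _ = 64 * W ^ 6 * (T ^ 2 * (T + K * Jy) * Jty ^ 2) * ((T + |x|) * Jx ^ 2) := by
            ring
        _ ≤ 64 * m ^ 6 * (T ^ 2 * (T + K * Jy) * Jty ^ 2) * ((T + |x|) * Jx ^ 2) := by
            have : W ^ 6 ≤ m ^ 6 := pow_le_pow_left₀ (by linarith) hWm 6
            apply mul_le_mul_of_nonneg_right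
            apply mul_le_mul_of_nonneg_right
            · linarith
            · positivity
            · positivity
    · -- m = jb2 k η; K ≤ m and Jy ≤ m
      have hmB : m = jb2 k η := min_eq_right hcase
      have hKm : K ≤ m := by
        rw [hmB, jb2, hKdef, show |(k:ℝ)| = Real.sqrt ((k:ℝ)^2) by rw [Real.sqrt_sq_eq_abs]]
        exact Real.sqrt_le_sqrt (by nlinarith [sq_nonneg η])
      have hJym : Jy ≤ m := by
        rw [hmB]
        calc Jy ≤ jb η := by
              apply jb_mono
              rw [hy, abs_div]
              calc |η| / |(k:ℝ)| ≤ |η| / 1 :=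
                    div_le_div_of_nonneg_left (abs_nonneg _) one_pos hK1
                _ = |η| := div_one _
          _ ≤ jb2 k η := by
              rw [jb, jb2]
              exact Real.sqrt_le_sqrt (by nlinarith [sq_nonneg ((k:ℝ))])
      have h5 : T ^ 2 ≤ 2 * Jty ^ 2 * Jy ^ 2 := by
        rw [hT, hJty, hJy, jb_sq, jb_sq, jb_sq]
        nlinarith [sq_nonneg ((t-y)*y), sq_nonneg ((t-y)+y), sq_nonneg ((t-y)-y)]
      have h6 : Jtx ^ 2 ≤ 2 * T ^ 2 * Jx ^ 2 := by
        rw [hT, hJtx, hJx, jb_sq, jb_sq, jb_sq]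
        nlinarith [sq_nonneg (t*x), sq_nonneg (t+x), sq_nonneg (t-x)]
      have h7 : T + K * Jx ≤ 2 * K * (T + |x|) := by
        have := jb_le_one_add_abs x
        nlinarith [abs_nonneg x]
      have h8 : T + |y| ≤ 2 * T * Jy := by
        have := abs_le_jb y
        nlinarith
      have hm0 : (0:ℝ) < m := by linarith
      calc T ^ 2 * (T + K * Jx) * Jtx ^ 2 * ((T + |y|) * Jy ^ 2)
          ≤ T ^ 2 * (2 * K * (T + |x|)) * (2 * T ^ 2 * Jx ^ 2) *
              ((2 * T * Jy) * Jy ^ 2) := by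
            apply mul_le_mul
            · apply mul_le_mul
              · exact mul_le_mul_of_nonneg_left h7 (by positivity)
              · exact h6
              · positivity
              · positivity
            · exact mul_le_mul_of_nonneg_right h8 (by positivity)
            · positivity
            · positivity
        _ = 8 * (K * Jy ^ 3) * (T ^ 2 * T ^ 2) * (T * (T + |x|) * Jx ^ 2) := by ring
        _ ≤ 8 * (K * Jy ^ 3) * (T ^ 2 * (2 * Jty ^ 2 * Jy ^ 2)) *
              (T * (T + |x|) * Jx ^ 2) := by
            have hXn : (0:ℝ) ≤ 8 * (K * Jy ^ 3) := by
              have : (0:ℝ) ≤ K * Jy ^ 3 := mul_nonneg hK0.le (by positivity)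
              linarith
            have hYn : (0:ℝ) ≤ T * (T + |x|) * Jx ^ 2 := by
              have h1 : (0:ℝ) ≤ T + |x| := by
                have := abs_nonneg x; linarith
              have := mul_nonneg hT0.le h1
              positivity
            exact mul_le_mul_of_nonneg_right
              (mul_le_mul_of_nonneg_left (mul_le_mul_of_nonneg_left h5 (by positivity)) hXn) hYn
        _ = 16 * (K * Jy ^ 5) * (T ^ 2 * T * Jty ^ 2) * ((T + |x|) * Jx ^ 2) := by ring
        _ ≤ 16 * (K * Jy ^ 5) * (T ^ 2 * (T + K * Jy) * Jty ^ 2) * ((T + |x|) * Jx ^ 2) := by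
            have hXn : (0:ℝ) ≤ 16 * (K * Jy ^ 5) := by
              have : (0:ℝ) ≤ K * Jy ^ 5 := mul_nonneg hK0.le (by positivity)
              linarith
            have hden : (0:ℝ) ≤ (T + |x|) * Jx ^ 2 := by
              have h1 : (0:ℝ) ≤ T + |x| := by
                have := abs_nonneg x; linarith
              positivity
            have hTle : T ≤ T + K * Jy := by nlinarith
            have inner2 : T ^ 2 * T * Jty ^ 2 ≤ T ^ 2 * (T + K * Jy) * Jty ^ 2 :=
              mul_le_mul_of_nonneg_right
                (mul_le_mul_of_nonneg_left hTle (by positivity)) (by positivity)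
            exact mul_le_mul_of_nonneg_right (mul_le_mul_of_nonneg_left inner2 hXn) hden
        _ ≤ 64 * m ^ 6 * (T ^ 2 * (T + K * Jy) * Jty ^ 2) * ((T + |x|) * Jx ^ 2) := by
            have hden : (0:ℝ) ≤ (T + |x|) * Jx ^ 2 := by
              have h1 : (0:ℝ) ≤ T + |x| := by
                have := abs_nonneg x; linarith
              positivity
            have hQn : (0:ℝ) ≤ T ^ 2 * (T + K * Jy) * Jty ^ 2 := by
              have h1 : (0:ℝ) ≤ T + K * Jy := by nlinarith
              positivity
            have hKJ : K * Jy ^ 5 ≤ m * m ^ 5 :=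
              mul_le_mul hKm (pow_le_pow_left₀ (by linarith) hJym 5) (by positivity) (by linarith)
            have hcoeff : 16 * (K * Jy ^ 5) ≤ 64 * m ^ 6 := by nlinarith [hKJ, pow_nonneg hm0.le 6]
            exact mul_le_mul_of_nonneg_right (mul_le_mul_of_nonneg_right hcoeff hQn) hden
  -- assemble
  have step1 : T ^ 2 * (T + K * Jx) * Jtx ^ 2 / ((T + |x|) * Jx ^ 2) ≤
      64 * m ^ 6 * (T ^ 2 * (T + K * Jy) * Jty ^ 2 / ((T + |y|) * Jy ^ 2)) := by
    rw [mul_div_assoc'] at *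
    rw [div_le_div_iff₀ hLden hRden]
    calc T ^ 2 * (T + K * Jx) * Jtx ^ 2 * ((T + |y|) * Jy ^ 2) ≤
        64 * m ^ 6 * (T ^ 2 * (T + K * Jy) * Jty ^ 2) * ((T + |x|) * Jx ^ 2) := key
      _ = 64 * m ^ 6 * (T ^ 2 * (T + K * Jy) * Jty ^ 2) * ((T + |x|) * Jx ^ 2) := rfl
  have hR0 : 0 ≤ T ^ 2 * (T + K * Jy) * Jty ^ 2 / ((T + |y|) * Jy ^ 2) := by positivity
  have step2 : 64 * m ^ 6 ≤ 64 * 479001600 / δ ^ 12 * Real.exp (δ * Real.sqrt m) :=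
    exp_bound_aux hδ0 hm1
  calc T ^ 2 * (T + K * Jx) * Jtx ^ 2 / ((T + |x|) * Jx ^ 2)
      ≤ 64 * m ^ 6 * (T ^ 2 * (T + K * Jy) * Jty ^ 2 / ((T + |y|) * Jy ^ 2)) := step1
    _ ≤ (64 * 479001600 / δ ^ 12 * Real.exp (δ * Real.sqrt m)) *
        (T ^ 2 * (T + K * Jy) * Jty ^ 2 / ((T + |y|) * Jy ^ 2)) :=
        mul_le_mul_of_nonneg_right step2 hR0
    _ = 64 * 479001600 / δ ^ 12 *
        (T ^ 2 * (T + K * Jy) * Jty ^ 2 / ((T + |y|) * Jy ^ 2)) *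
        Real.exp (δ * Real.sqrt m) := by ring
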